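/- Let x ∈ D and let n_0 ≥ 0 be the smallest integer such that x ∈ D_{n_0+1}. Then for every integer n > 2n_0, μ({y : 0 < |y − x| < 2^{−(n+1)} and (T(y) − T(x))/(y − x) ≥ n − 2n_0}) ≥ (1/4)·2^{−n}, where μ denotes Lebesgue measure on ℝ. -/

import Mathlib

open MeasureTheory Filter Set

noncomputable section

/-- The set of dyadic numbers of level `n`: `{k / 2^n : k ∈ ℤ}`. -/
def Dset (n : ℕ) : Set ℝ := {y : ℝ | ∃ k : ℤ, y = (k : ℝ) / 2 ^ n}

/-- The set of all dyadic numbers. -/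
def Ddyadic : Set ℝ := ⋃ n, Dset n

/-- `g k x = dist(x, D_k)`. -/
def g (k : ℕ) (x : ℝ) : ℝ := Metric.infDist x (Dset k)

/-- The Takagi function `T x = ∑_{k=1}^∞ g_k(x)`. -/
def T (x : ℝ) : ℝ := ∑' k : ℕ, g (k + 1) x

/-- `G' n x = g_1'(x) + ⋯ + g_n'(x)` (so `G' 0 x = 0`). -/
def G' (n : ℕ) (x : ℝ) : ℝ := ∑ k ∈ Finset.range n, deriv (g (k + 1)) x

/-- `f` is approximately derivable at `x` with approximate derivative `L`:
for every `ε > 0`, the relative measure of the set of points `y` in `(x - r, x + r)`,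
`y ≠ x`, where `|(f y - f x - L (y - x)) / (y - x)| ≥ ε`, divided by `2r`,
tends to `0` as `r → 0⁺`. -/
def ApproxDerivAt (f : ℝ → ℝ) (x L : ℝ) : Prop :=
  ∀ ε > (0 : ℝ), Tendsto
    (fun r : ℝ => volume (Ioo (x - r) (x + r) ∩
        {y : ℝ | y ≠ x ∧ ε ≤ |(f y - f x - L * (y - x)) / (y - x)|}) /
      ENNReal.ofReal (2 * r))
    (nhdsWithin 0 (Ioi 0)) (nhds 0)

lemma Dset_nonempty (n : ℕ) : (Dset n).Nonempty := ⟨0, 0, by simp⟩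

lemma mem_Dset_mono {m n : ℕ} (h : m ≤ n) {x : ℝ} (hx : x ∈ Dset m) : x ∈ Dset n := by
  obtain ⟨j, rfl⟩ := hx
  refine ⟨j * 2 ^ (n - m), ?_⟩
  have h2 : (2:ℝ) ^ n = 2 ^ m * 2 ^ (n - m) := by
    rw [← pow_add]; congr 1; omega
  push_cast
  rw [h2]
  field_simp

lemma g_zero_of_mem {k : ℕ} {x : ℝ} (h : x ∈ Dset k) : g k x = 0 :=
  Metric.infDist_zero_of_mem h

lemma g_nonneg (k : ℕ) (y : ℝ) : 0 ≤ g k y := Metric.infDist_nonneg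

lemma g_le (k : ℕ) (y : ℝ) : g k y ≤ ((2:ℝ)^k)⁻¹ := by
  have h2 : (0:ℝ) < 2 ^ k := by positivity
  have hm : ((⌊y * 2 ^ k⌋ : ℝ) / 2 ^ k) ∈ Dset k := ⟨⌊y * 2 ^ k⌋, rfl⟩
  have hfl := Int.floor_le (y * 2 ^ k)
  have hfu := Int.lt_floor_add_one (y * 2 ^ k)
  have key : y - (⌊y * 2 ^ k⌋ : ℝ)/2^k = (y * 2^k - ⌊y * 2 ^ k⌋)/2^k := by
    field_simp
  calc g k y ≤ dist y ((⌊y * 2 ^ k⌋ : ℝ) / 2 ^ k) := Metric.infDist_le_dist_of_mem hm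
    _ ≤ ((2:ℝ)^k)⁻¹ := by
        rw [Real.dist_eq, key, abs_div, abs_of_pos h2, div_le_iff₀ h2,
          inv_mul_cancel₀ h2.ne', abs_le]
        constructor <;> linarith

lemma summable_g (y : ℝ) : Summable (fun k : ℕ => g (k + 1) y) := by
  apply Summable.of_nonneg_of_le (fun k => g_nonneg _ _) (fun k => ?_)
    summable_geometric_two
  calc g (k+1) y ≤ ((2:ℝ)^(k+1))⁻¹ := g_le _ _
    _ = (1/2:ℝ)^(k+1) := by rw [one_div, inv_pow]
    _ ≤ (1/2:ℝ)^k := pow_le_pow_of_le_one (by norm_num) (by norm_num) (by omega)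

lemma g_eq_of_close {k : ℕ} {x y : ℝ} (hx : x ∈ Dset k) (h1 : x < y)
    (h2 : y - x ≤ ((2:ℝ)^(k+1))⁻¹) : g k y = y - x := by
  obtain ⟨i, rfl⟩ := hx
  have h2k : (0:ℝ) < 2 ^ k := by positivity
  have h2k1 : (0:ℝ) < 2 ^ (k+1) := by positivity
  have hinv : ((2:ℝ)^(k+1))⁻¹ * 2 = ((2:ℝ)^k)⁻¹ := by
    rw [pow_succ]; field_simp
  apply le_antisymm
  · calc g k y ≤ dist y ((i:ℝ)/2^k) := Metric.infDist_le_dist_of_mem ⟨i, rfl⟩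
      _ = y - (i:ℝ)/2^k := by rw [Real.dist_eq, abs_of_pos (by linarith)]
  · have hne : Nonempty ↥(Dset k) := (Dset_nonempty k).to_subtype
    rw [g, Metric.infDist_eq_iInf]
    apply le_ciInf
    rintro ⟨z, j, rfl⟩
    rw [Real.dist_eq]
    rcases eq_or_ne j i with rfl | hji
    · rw [abs_of_pos (by linarith)]
    · have hij : (1:ℝ) ≤ |(i:ℝ) - j| := by
        have h0 : (1:ℤ) ≤ |i - j| := Int.one_le_abs (sub_ne_zero.2 hji.symm)
        have h1' : (1:ℝ) ≤ |((i - j : ℤ) : ℝ)| := by exact_mod_cast h0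
        push_cast at h1'
        exact h1'
      have hsep : ((2:ℝ)^k)⁻¹ ≤ |(i:ℝ)/2^k - (j:ℝ)/2^k| := by
        rw [div_sub_div_same, abs_div, abs_of_pos h2k, le_div_iff₀ h2k,
          inv_mul_cancel₀ h2k.ne']
        exact hij
      have htri : |(i:ℝ)/2^k - (j:ℝ)/2^k| ≤ |y - (j:ℝ)/2^k| + (y - (i:ℝ)/2^k) := by
        have h3 : |(i:ℝ)/2^k - (j:ℝ)/2^k - (y - (j:ℝ)/2^k)| = y - (i:ℝ)/2^k := by
          rw [show (i:ℝ)/2^k - (j:ℝ)/2^k - (y - (j:ℝ)/2^k) = -(y - (i:ℝ)/2^k) by ring,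
            abs_neg, abs_of_pos (by linarith)]
        have h4 := abs_sub_abs_le_abs_sub ((i:ℝ)/2^k - (j:ℝ)/2^k) (y - (j:ℝ)/2^k)
        rw [h3] at h4
        linarith
      have hh : 2 * (y - (i:ℝ)/2^k) ≤ ((2:ℝ)^k)⁻¹ := by
        have := mul_le_mul_of_nonneg_right h2 (by norm_num : (0:ℝ) ≤ 2)
        rw [hinv] at this; linarith
      linarith

theorem takagi_dyadic_slope_measure (x : ℝ) (hxD : x ∈ Ddyadic)
    (n0 : ℕ) (hx : x ∈ Dset (n0 + 1)) (hmin : ∀ m : ℕ, x ∈ Dset (m + 1) → n0 ≤ m) :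
    ∀ n : ℕ, 2 * n0 < n →
      ENNReal.ofReal ((1 / 4) * ((2 : ℝ) ^ n)⁻¹) ≤
        volume {y : ℝ | 0 < |y - x| ∧ |y - x| < ((2 : ℝ) ^ (n + 1))⁻¹ ∧
          (n : ℝ) - 2 * n0 ≤ (T y - T x) / (y - x)} := by
  intro n hn
  have hn0n : n0 ≤ n := by omega
  have hpos : (0:ℝ) < ((2:ℝ)^(n+1))⁻¹ := by positivity
  have hsub : Ioo x (x + ((2:ℝ)^(n+1))⁻¹) ⊆
      {y : ℝ | 0 < |y - x| ∧ |y - x| < ((2 : ℝ) ^ (n + 1))⁻¹ ∧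
        (n : ℝ) - 2 * n0 ≤ (T y - T x) / (y - x)} := by
    rintro y ⟨hy1, hy2⟩
    have hyx : 0 < y - x := by linarith
    have habs : |y - x| = y - x := abs_of_pos hyx
    refine ⟨by rw [habs]; exact hyx, by rw [habs]; linarith, ?_⟩
    rw [le_div_iff₀ hyx]
    -- T x is a finite sum
    have hTx : T x = ∑ k ∈ Finset.range n0, g (k+1) x := by
      rw [T]
      apply tsum_eq_sum
      intro k hk
      rw [Finset.mem_range, not_lt] at hk
      exact g_zero_of_mem (mem_Dset_mono (by omega) hx)
    -- T y is at least the partial sum up to n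
    have hTy : ∑ k ∈ Finset.range n, g (k+1) y ≤ T y := by
      rw [T, ← Summable.sum_add_tsum_nat_add n (summable_g y)]
      have : 0 ≤ ∑' (i : ℕ), g (i + n + 1) y :=
        tsum_nonneg (fun i => g_nonneg _ _)
      linarith
    have hsplit : ∑ k ∈ Finset.range n, g (k+1) y =
        ∑ k ∈ Finset.range n0, g (k+1) y + ∑ k ∈ Finset.Ico n0 n, g (k+1) y := by
      rw [Finset.range_eq_Ico,
        ← Finset.sum_Ico_consecutive (fun k => g (k+1) y) (Nat.zero_le n0) hn0n,
        ← Finset.range_eq_Ico]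
    have hB : ∑ k ∈ Finset.Ico n0 n, g (k+1) y = ((n:ℝ) - n0) * (y - x) := by
      have heach : ∀ k ∈ Finset.Ico n0 n, g (k+1) y = y - x := by
        intro k hk
        rw [Finset.mem_Ico] at hk
        apply g_eq_of_close (mem_Dset_mono (by omega) hx) (by linarith)
        have hle : ((2:ℝ)^(n+1))⁻¹ ≤ ((2:ℝ)^(k+1+1))⁻¹ := by
          apply inv_anti₀ (by positivity)
          apply pow_le_pow_right₀ (by norm_num)
          omega
        linarith
      rw [Finset.sum_congr rfl heach, Finset.sum_const, Nat.card_Ico,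
        nsmul_eq_mul]
      push_cast [hn0n]
      ring
    have hA : ∑ k ∈ Finset.range n0, (g (k+1) x - g (k+1) y) ≤ (n0:ℝ) * (y - x) := by
      calc ∑ k ∈ Finset.range n0, (g (k+1) x - g (k+1) y)
          ≤ ∑ _k ∈ Finset.range n0, (y - x) := by
            apply Finset.sum_le_sum
            intro k _
            have := Metric.infDist_le_infDist_add_dist (x := x) (y := y) (s := Dset (k+1))
            rw [Real.dist_eq, abs_sub_comm, habs] at this
            change g (k+1) x ≤ g (k+1) y + (y - x) at this
            linarith
        _ = (n0:ℝ) * (y - x) := by rw [Finset.sum_const, nsmul_eq_mul, Finset.card_range]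
    have := hTy
    rw [hsplit] at this
    have hsum : (∑ k ∈ Finset.range n0, g (k+1) x) - ∑ k ∈ Finset.range n0, g (k+1) y
        = ∑ k ∈ Finset.range n0, (g (k+1) x - g (k+1) y) := by
      rw [Finset.sum_sub_distrib]
    nlinarith [hTx, hB, hA, hsum]
  calc ENNReal.ofReal ((1 / 4) * ((2 : ℝ) ^ n)⁻¹)
      ≤ ENNReal.ofReal (((2:ℝ)^(n+1))⁻¹) := by
        apply ENNReal.ofReal_le_ofReal
        have h1 : ((2:ℝ)^(n+1))⁻¹ = ((2:ℝ)^n)⁻¹ * (1/2) := by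
          rw [pow_succ, mul_inv]; ring
        have h2 : (0:ℝ) ≤ ((2:ℝ)^n)⁻¹ := by positivity
        rw [h1]; nlinarith
    _ = volume (Ioo x (x + ((2:ℝ)^(n+1))⁻¹)) := by
        rw [Real.volume_Ioo]
        congr 1
        ring
    _ ≤ _ := measure_mono hsub
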